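/- Let G be a countable group and let μ be a probability measure on the space Sub(G) of subgroups of G (with the σ-algebra generated by the sets {H : g ∈ H}, g ∈ G) that is invariant under the conjugation action g·H = gHg⁻¹. Then the function ψ_μ : G → ℝ defined by ψ_μ(g) = μ({H ∈ Sub(G) : g ∈ H}) is a character on G: ψ_μ(g₁g₂) = ψ_μ(g₂g₁) for all g₁, g₂ ∈ G, ψ_μ(e) = 1, and for every n and all g₁, …, g_n ∈ G the n×n matrix with entries ψ_μ(g_i g_j⁻¹) is positive semidefinite. -/

import Mathlib

open MeasureTheory

/-- The σ-algebra on the space of subgroups of `G` generated by the sets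
`{H : g ∈ H}`, `g ∈ G` (the Borel σ-algebra of the product topology from `{0,1}^G`). -/
instance subgroupMeasurableSpace (G : Type*) [Group G] : MeasurableSpace (Subgroup G) :=
  MeasurableSpace.generateFrom {A : Set (Subgroup G) | ∃ g : G, A = {H : Subgroup G | g ∈ H}}

/-- for an invariant random subgroup `μ` of a countable group `G` (a probability
measure on `Sub(G)` invariant under conjugation), the function
`ψ_μ(g) = μ {H : g ∈ H}` is a character: it is central, `ψ_μ(1) = 1`, and all matrices
`(ψ_μ(g_i g_j⁻¹))` are positive semidefinite. -/
theorem stmt_1 {G : Type*} [Group G] [Countable G]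
    (μ : Measure (Subgroup G)) [IsProbabilityMeasure μ]
    (hinv : ∀ g : G, MeasurePreserving
      (fun H : Subgroup G => Subgroup.map (MulAut.conj g).toMonoidHom H) μ μ) :
    (∀ g₁ g₂ : G,
      (μ {H : Subgroup G | g₁ * g₂ ∈ H}).toReal = (μ {H : Subgroup G | g₂ * g₁ ∈ H}).toReal) ∧
    (μ {H : Subgroup G | (1 : G) ∈ H}).toReal = 1 ∧
    (∀ (n : ℕ) (g : Fin n → G),
      (Matrix.of fun i j : Fin n =>
        (μ {H : Subgroup G | g i * (g j)⁻¹ ∈ H}).toReal).PosSemidef) := by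
  classical
  have mSet : ∀ a : G, MeasurableSet {H : Subgroup G | a ∈ H} :=
    fun a => MeasurableSpace.measurableSet_generateFrom ⟨a, rfl⟩
  have hsymm : ∀ a : G, {H : Subgroup G | a ∈ H} = {H : Subgroup G | a⁻¹ ∈ H} := by
    intro a; ext H; simp [Subgroup.inv_mem_iff]
  refine ⟨?_, ?_, ?_⟩
  · intro g₁ g₂
    have hpre : (fun H : Subgroup G => Subgroup.map (MulAut.conj g₁).toMonoidHom H) ⁻¹'
        {H : Subgroup G | g₁ * g₂ ∈ H} = {H : Subgroup G | g₂ * g₁ ∈ H} := by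
      ext H
      simp only [Set.mem_preimage, Set.mem_setOf_eq, Subgroup.mem_map_equiv,
        MulAut.conj_symm_apply]
      rw [show g₁⁻¹ * (g₁ * g₂) * g₁ = g₂ * g₁ by group]
    rw [← (hinv g₁).measure_preimage (mSet (g₁ * g₂)).nullMeasurableSet, hpre]
  · rw [show {H : Subgroup G | (1 : G) ∈ H} = (Set.univ : Set (Subgroup G)) by
      ext H; simp [Subgroup.one_mem], measure_univ, ENNReal.toReal_one]
  · intro n g
    constructor
    · ext i j
      simp only [Matrix.conjTranspose_apply, Matrix.of_apply, star_trivial]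
      rw [hsymm (g j * (g i)⁻¹)]
      simp [mul_inv_rev]
    · intro x
      have hint : ∀ i j : Fin n,
          ∫ H, ({H : Subgroup G | g i * (g j)⁻¹ ∈ H}.indicator
              (fun _ => x i * x j) H) ∂μ
            = x i * ((μ {H : Subgroup G | g i * (g j)⁻¹ ∈ H}).toReal * x j) := by
        intro i j
        rw [integral_indicator_const _ (mSet _)]
        simp [smul_eq_mul, measureReal_def]; ring
      have hInteg : ∀ i j : Fin n,
          Integrable ({H : Subgroup G | g i * (g j)⁻¹ ∈ H}.indicator
            (fun _ => x i * x j)) μ :=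
        fun i j => (integrable_const _).indicator (mSet _)
      have key : (0:ℝ) ≤ ∑ i : Fin n, ∑ j : Fin n,
          x i * ((μ {H : Subgroup G | g i * (g j)⁻¹ ∈ H}).toReal * x j) := by
        have heq : ∑ i : Fin n, ∑ j : Fin n,
            x i * ((μ {H : Subgroup G | g i * (g j)⁻¹ ∈ H}).toReal * x j)
            = ∫ H, (∑ i : Fin n, ∑ j : Fin n,
                ({H : Subgroup G | g i * (g j)⁻¹ ∈ H}.indicator
                  (fun _ => x i * x j) H)) ∂μ := by
          rw [integral_finset_sum _ (fun i _ => integrable_finset_sum _ (fun j _ => hInteg i j))]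
          refine Finset.sum_congr rfl fun i _ => ?_
          rw [integral_finset_sum _ (fun j _ => hInteg i j)]
          exact Finset.sum_congr rfl fun j _ => (hint i j).symm
        rw [heq]
        refine integral_nonneg fun H => ?_
        -- pointwise nonnegativity via the right-coset quotient
        set q : Fin n → Quotient (QuotientGroup.rightRel H) :=
          fun i => Quotient.mk _ (g i) with hq
        have hmem : ∀ i j : Fin n, (H ∈ {H : Subgroup G | g i * (g j)⁻¹ ∈ H}) ↔ q i = q j := by
          intro i j
          constructor
          · intro h
            exact Quotient.sound (QuotientGroup.rightRel_apply.2 (by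
              rw [← Subgroup.inv_mem_iff]; simpa [mul_inv_rev] using h))
          · intro h
            have h2 := QuotientGroup.rightRel_apply.1 (Quotient.exact h)
            exact Set.mem_setOf.2 (by
              rw [← Subgroup.inv_mem_iff]; simpa [mul_inv_rev] using h2)
        set T : Quotient (QuotientGroup.rightRel H) → ℝ :=
          fun c => ∑ j : Fin n, if q j = c then x j else 0 with hT
        have step1 : (∑ i : Fin n, ∑ j : Fin n,
            ({H : Subgroup G | g i * (g j)⁻¹ ∈ H}.indicator (fun _ => x i * x j) H))
            = ∑ i : Fin n, x i * T (q i) := by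
          refine Finset.sum_congr rfl fun i _ => ?_
          rw [hT, Finset.mul_sum]
          refine Finset.sum_congr rfl fun j _ => ?_
          rw [Set.indicator_apply]
          by_cases h : q i = q j
          · rw [if_pos ((hmem i j).2 h), if_pos h.symm]
          · rw [if_neg (fun hc => h ((hmem i j).1 hc)), if_neg (fun hc => h hc.symm)]
            ring
        rw [step1]
        rw [← Finset.sum_fiberwise_of_maps_to
          (t := Finset.univ.image q)
          (fun i _ => Finset.mem_image_of_mem q (Finset.mem_univ i))
          (fun i => x i * T (q i))]
        refine Finset.sum_nonneg fun c _ => ?_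
        have : ∑ i ∈ Finset.univ.filter (fun i => q i = c), x i * T (q i)
            = T c * T c := by
          rw [show ∑ i ∈ Finset.univ.filter (fun i => q i = c), x i * T (q i)
              = ∑ i ∈ Finset.univ.filter (fun i => q i = c), x i * T c from
            Finset.sum_congr rfl fun i hi => by
              rw [(Finset.mem_filter.1 hi).2],
            ← Finset.sum_mul, hT, Finset.sum_filter]
        rw [this]
        exact mul_self_nonneg _
      -- translate quadratic form
      simpa [Matrix.mulVec, dotProduct, Finsupp.sum_fintype, Finset.mul_sum, mul_assoc] using key
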